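/- arXiv:0704.3379 — 3 statements merged into one kernel-verified Lean document; each statement's English description precedes it below -/
import Mathlib

section
/- Under the same hypotheses, if additionally g(∇S(X,X),X)=0 for all vector fields X (the A^∇ condition restricted to eigenvector fields) and g(X,X) is nowhere zero for an eigenvector field X of S with eigenfunction λ, then X·λ = 0, i.e. λ is constant along the eigendistribution. -/
/-- Under the A^∇ condition `g(∇S(X,X),X) = 0` for all `X`, if `X` is
an eigenvector field of `S` with eigenfunction `λ` and `g(X,X)` is nowhere zero,
then `X·λ = 0`. Functions on the manifold are modelled as `M → ℝ`. -/
theorem eigenfunction_constant_along_eigendistribution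
    {M V : Type*} [AddCommGroup V] [Module (M → ℝ) V]
    (g : V → V → M → ℝ) (nab : V → V → V) (lie : V → V → V)
    (act : V → (M → ℝ) → M → ℝ)
    (S : V → V) (lam : M → ℝ) (X : V)
    (hgsym : ∀ X Y, g X Y = g Y X)
    (hgsub : ∀ X Y Z : V, g (X - Y) Z = g X Z - g Y Z)
    (hgsmul : ∀ (c : M → ℝ) (X Y : V), g (c • X) Y = c * g X Y)
    (htf : ∀ X Y, nab X Y - nab Y X = lie X Y)
    (hmetric : ∀ X Y Z, act X (g Y Z) = g (nab X Y) Z + g Y (nab X Z))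
    (hSsym : ∀ X Y, g (S X) Y = g X (S Y))
    (hLeib : ∀ (Y : V) (f : M → ℝ) (Z : V), nab Y (f • Z) = act Y f • Z + f • nab Y Z)
    -- the A^∇ condition restricted to eigenvector fields
    (hA : ∀ Y : V, g (nab Y (S Y) - S (nab Y Y)) Y = 0)
    (hX : S X = lam • X)
    -- g(X,X) is nowhere zero
    (hne : ∀ p : M, g X X p ≠ 0) :
    act X lam = 0 := by
  have h0 : ∀ Z : V, g 0 Z = 0 := by
    intro Z
    have := hgsub 0 0 Z
    simpa using this
  have hneg : ∀ B Z : V, g (-B) Z = - g B Z := by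
    intro B Z
    have := hgsub 0 B Z
    simpa [h0] using this
  have hadd : ∀ A B Z : V, g (A + B) Z = g A Z + g B Z := by
    intro A B Z
    have := hgsub A (-B) Z
    simpa [hneg, sub_neg_eq_add] using this
  have key := hA X
  rw [hX, hLeib, hgsub, hadd, hgsmul, hgsmul] at key
  have hS : g (S (nab X X)) X = lam * g (nab X X) X := by
    rw [hSsym, hX, hgsym, hgsmul, hgsym]
  rw [hS] at key
  have key2 : act X lam * g X X = 0 := by
    have : act X lam * g X X + lam * g (nab X X) X - lam * g (nab X X) X = 0 := key
    simpa using this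
  funext p
  have := congrFun key2 p
  have hp : act X lam p * g X X p = 0 := this
  exact (mul_eq_zero.mp hp).resolve_right (hne p)
end

section
/- Let ∇ be a torsion-free connection on M and D_i, D_j, D_l three pairwise 'orthogonal' distributions with respect to a (0,2)-tensor g preserved by ∇ (∇g=0), such that each pairwise sum D_a ⊕ D_b is integrable. Then for sections X ∈ D_i, Y ∈ D_j, Z ∈ D_l with i, j, l pairwise distinct, the Koszul formula gives 2g(∇_X Y, Z) = 0. -/
/-- For a torsion-free metric connection and three pairwise
g-orthogonal distributions whose pairwise sums are integrable, the Koszul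
formula gives `2 g(∇_X Y, Z) = 0` for sections `X ∈ D_i`, `Y ∈ D_j`, `Z ∈ D_l`. -/
theorem koszul_vanishing_three_distributions
    {C V : Type*} [CommRing C] [AddCommGroup V] [Module ℝ V]
    (g : V → V → C) (nab : V → V → V) (lie : V → V → V) (act : V → C → C)
    (Di Dj Dl : Submodule ℝ V)
    (hgsym : ∀ X Y, g X Y = g Y X)
    (hgadd : ∀ X Y Z : V, g (X + Y) Z = g X Z + g Y Z)
    (htf : ∀ X Y, nab X Y - nab Y X = lie X Y)
    (hmetric : ∀ X Y Z, act X (g Y Z) = g (nab X Y) Z + g Y (nab X Z))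
    -- pairwise orthogonality
    (horthoij : ∀ X ∈ Di, ∀ Y ∈ Dj, g X Y = 0)
    (horthoil : ∀ X ∈ Di, ∀ Z ∈ Dl, g X Z = 0)
    (horthojl : ∀ Y ∈ Dj, ∀ Z ∈ Dl, g Y Z = 0)
    -- each pairwise sum is integrable
    (hintij : ∀ X ∈ Di, ∀ Y ∈ Dj, lie X Y ∈ Di ⊔ Dj)
    (hintil : ∀ X ∈ Di, ∀ Z ∈ Dl, lie X Z ∈ Di ⊔ Dl)
    (hintjl : ∀ Y ∈ Dj, ∀ Z ∈ Dl, lie Y Z ∈ Dj ⊔ Dl) :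
    ∀ X ∈ Di, ∀ Y ∈ Dj, ∀ Z ∈ Dl, (2 : C) * g (nab X Y) Z = 0 := by
  intro X hX Y hY Z hZ
  -- g 0 w = 0
  have gz : ∀ w : V, g 0 w = 0 := by
    intro w
    have h := hgadd 0 0 w
    rw [add_zero] at h
    linear_combination -h
  -- act X 0 = 0
  have actz : ∀ w : V, act w 0 = 0 := by
    intro w
    have h := hmetric w 0 0
    rw [gz 0, hgsym (nab w 0) 0, gz (nab w 0), add_zero] at h
    exact h
  -- g is additive in second argument and subtractive
  have gsub : ∀ u v w : V, g (u - v) w = g u w - g v w := by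
    intro u v w
    have h := hgadd (u - v) v w
    rw [sub_add_cancel] at h
    linear_combination -h
  -- three metric-compatibility identities with zero left side
  have e1 : g (nab X Y) Z + g Y (nab X Z) = 0 := by
    have h := hmetric X Y Z
    rw [horthojl Y hY Z hZ, actz X] at h
    exact h.symm
  have e2 : g (nab Y X) Z + g X (nab Y Z) = 0 := by
    have h := hmetric Y X Z
    rw [horthoil X hX Z hZ, actz Y] at h
    exact h.symm
  have e3 : g (nab Z X) Y + g X (nab Z Y) = 0 := by
    have h := hmetric Z X Y
    rw [horthoij X hX Y hY, actz Z] at h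
    exact h.symm
  -- elements of pairwise sums are orthogonal to the third section
  have liexy : g (lie X Y) Z = 0 := by
    obtain ⟨u, hu, v, hv, hw⟩ := Submodule.mem_sup.mp (hintij X hX Y hY)
    rw [← hw, hgadd, horthoil u hu Z hZ, horthojl v hv Z hZ, add_zero]
  have liexz : g (lie X Z) Y = 0 := by
    obtain ⟨u, hu, v, hv, hw⟩ := Submodule.mem_sup.mp (hintil X hX Z hZ)
    rw [← hw, hgadd, horthoij u hu Y hY, hgsym, horthojl Y hY v hv, add_zero]
  have lieyz : g (lie Y Z) X = 0 := by
    obtain ⟨u, hu, v, hv, hw⟩ := Submodule.mem_sup.mp (hintjl Y hY Z hZ)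
    rw [← hw, hgadd, hgsym u X, horthoij X hX u hu, hgsym v X, horthoil X hX v hv, add_zero]
  -- torsion-free rewrites
  have t1 : g (nab X Y) Z - g (nab Y X) Z = 0 := by
    rw [← gsub, htf, liexy]
  have t2 : g (nab X Z) Y - g (nab Z X) Y = 0 := by
    rw [← gsub, htf, liexz]
  have t3 : g (nab Y Z) X - g (nab Z Y) X = 0 := by
    rw [← gsub, htf, lieyz]
  have s1 : g Y (nab X Z) = g (nab X Z) Y := hgsym _ _
  have s2 : g X (nab Y Z) = g (nab Y Z) X := hgsym _ _
  have s3 : g X (nab Z Y) = g (nab Z Y) X := hgsym _ _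
  linear_combination e1 + e2 - e3 + t1 - t2 - t3 - s1 - s2 + s3
end

section
/- Let S be a g-symmetric (1,1)-tensor with constant real eigenvalues λ₀, λ₁, …, λ_k and eigendistributions D₀ (= radical of g), D₁, …, D_k, such that every sum D_{α₁} ⊕ ⋯ ⊕ D_{α_p} of eigendistributions is integrable, and D₀ ⊕ D_i is autoparallel-closed in the sense that ∇_ξ X ∈ D₀ ⊕ D_i for ξ ∈ D₀, X ∈ D_i. Then ∇S(ξ, X) = (λ_i − λ₀)·p₀(∇_ξ X) ∈ D₀, where p₀ is the projection onto D₀; in particular ∇S(ξ, ·) takes values in the radical D₀. -/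
/-- With constant eigenvalues `λ₀, λ_i`, eigendistributions
`D₀` (the radical) and `D_i`, `ξ ∈ D₀`, `X ∈ D_i`, and `∇_ξ X ∈ D₀ ⊕ D_i`
(from integrability of the almost product structure), one has
`∇S(ξ,X) = (λ_i − λ₀) • p₀(∇_ξ X) ∈ D₀`, where `p₀` projects onto `D₀`. -/
theorem covderiv_S_radical_valued
    {V : Type*} [AddCommGroup V] [Module ℝ V]
    (nab : V → V → V) (S p0 : V →ₗ[ℝ] V)
    (D0 Di : Submodule ℝ V) (lam0 lami : ℝ)
    (ξ X : V) (hξ : ξ ∈ D0) (hX : X ∈ Di)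
    (hnabsmul : ∀ (a : ℝ) (Y Z : V), nab Y (a • Z) = a • nab Y Z)
    -- constant eigenvalues on the eigendistributions
    (heig0 : ∀ v ∈ D0, S v = lam0 • v)
    (heigi : ∀ v ∈ Di, S v = lami • v)
    -- p₀ is the projection onto D₀ in the decomposition D₀ ⊕ D_i ⊕ ⋯
    (hp0mem : ∀ v : V, p0 v ∈ D0)
    (hp0id : ∀ v ∈ D0, p0 v = v)
    (hsplit : ∀ v ∈ D0 ⊔ Di, v - p0 v ∈ Di)
    -- D₀ ⊕ D_i is autoparallel-closed
    (hmem : nab ξ X ∈ D0 ⊔ Di) :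
    nab ξ (S X) - S (nab ξ X) = (lami - lam0) • p0 (nab ξ X) ∧
    nab ξ (S X) - S (nab ξ X) ∈ D0 := by
  set v := nab ξ X with hv
  have hSv : S v = lam0 • p0 v + lami • (v - p0 v) := by
    have : S v = S (p0 v) + S (v - p0 v) := by
      rw [← map_add]; congr 1; abel
    rw [this, heig0 _ (hp0mem v), heigi _ (hsplit v hmem)]
  have hmain : nab ξ (S X) - S v = (lami - lam0) • p0 v := by
    rw [heigi X hX, hnabsmul, hSv, ← hv]
    module
  exact ⟨hmain, hmain ▸ Submodule.smul_mem _ _ (hp0mem v)⟩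
end
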